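/- Let T > 0, let f : ℝ → ℝ be continuously differentiable on [0,T] with f(t) > 0 for all t ∈ [0,T], and let m ∈ ℝ. Let u, v, p, q : ℝ → ℂ be continuously differentiable on [0,T], and define D(u,v) = ( i·(v' + (f'/(2f)) v + (m/f) v), i·(u' + (f'/(2f)) u − (m/f) u) ). Suppose the pairs (u,v) and (p,q) satisfy the APS boundary conditions, i.e. either u(0) = 0, v(T) = 0, p(0) = 0, q(T) = 0 (the case m > 0), or v(0) = 0, u(T) = 0, q(0) = 0, p(T) = 0 (the case m < 0). Then ∫₀ᵀ [ (D(u,v))₁ conj(p) + (D(u,v))₂ conj(q) ] f dt = ∫₀ᵀ [ u conj((D(p,q))₁) + v conj((D(p,q))₂) ] f dt; that is, the modewise Dirac operator with APS boundary conditions is symmetric in the weighted L² inner product. -/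

import Mathlib

open Complex Set intervalIntegral

/-- **Symmetry of the modewise Dirac operator under APS boundary conditions.**
If both pairs `(u,v)` and `(p,q)` satisfy the APS boundary conditions
(`u(0)=0, v(T)=0, p(0)=0, q(T)=0` in the case `m > 0`, or
`v(0)=0, u(T)=0, q(0)=0, p(T)=0` in the case `m < 0`), then
`⟨D(u,v),(p,q)⟩_{f dt} = ⟨(u,v),D(p,q)⟩_{f dt}`. -/
theorem aps_symmetric_weighted
    (T : ℝ) (hT : 0 < T)
    (f f' : ℝ → ℝ)
    (hf : ∀ t ∈ Icc (0:ℝ) T, HasDerivAt f (f' t) t)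
    (hf'c : ContinuousOn f' (Icc (0:ℝ) T))
    (hfpos : ∀ t ∈ Icc (0:ℝ) T, 0 < f t)
    (m : ℝ)
    (u u' v v' p p' q q' : ℝ → ℂ)
    (hu : ∀ t ∈ Icc (0:ℝ) T, HasDerivAt u (u' t) t)
    (hv : ∀ t ∈ Icc (0:ℝ) T, HasDerivAt v (v' t) t)
    (hp : ∀ t ∈ Icc (0:ℝ) T, HasDerivAt p (p' t) t)
    (hq : ∀ t ∈ Icc (0:ℝ) T, HasDerivAt q (q' t) t)
    (hu'c : ContinuousOn u' (Icc (0:ℝ) T))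
    (hv'c : ContinuousOn v' (Icc (0:ℝ) T))
    (hp'c : ContinuousOn p' (Icc (0:ℝ) T))
    (hq'c : ContinuousOn q' (Icc (0:ℝ) T))
    -- components of D(u,v) and D(p,q):
    (Duv₁ Duv₂ Dpq₁ Dpq₂ : ℝ → ℂ)
    (hDuv₁ : ∀ t, Duv₁ t = Complex.I *
      (v' t + ((f' t : ℂ) / (2 * (f t : ℂ))) * v t + ((m : ℂ) / (f t : ℂ)) * v t))
    (hDuv₂ : ∀ t, Duv₂ t = Complex.I *
      (u' t + ((f' t : ℂ) / (2 * (f t : ℂ))) * u t - ((m : ℂ) / (f t : ℂ)) * u t))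
    (hDpq₁ : ∀ t, Dpq₁ t = Complex.I *
      (q' t + ((f' t : ℂ) / (2 * (f t : ℂ))) * q t + ((m : ℂ) / (f t : ℂ)) * q t))
    (hDpq₂ : ∀ t, Dpq₂ t = Complex.I *
      (p' t + ((f' t : ℂ) / (2 * (f t : ℂ))) * p t - ((m : ℂ) / (f t : ℂ)) * p t))
    -- APS boundary conditions (case m > 0, or case m < 0):
    (hAPS : (u 0 = 0 ∧ v T = 0 ∧ p 0 = 0 ∧ q T = 0)
          ∨ (v 0 = 0 ∧ u T = 0 ∧ q 0 = 0 ∧ p T = 0)) :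
    (∫ t in (0:ℝ)..T,
        (Duv₁ t * (starRingEnd ℂ) (p t) + Duv₂ t * (starRingEnd ℂ) (q t)) * (f t : ℂ))
    = (∫ t in (0:ℝ)..T,
        (u t * (starRingEnd ℂ) (Dpq₁ t) + v t * (starRingEnd ℂ) (Dpq₂ t)) * (f t : ℂ)) := by
  have hT0 : (0:ℝ) ≤ T := hT.le
  have hIcc : uIcc (0:ℝ) T = Icc 0 T := uIcc_of_le hT0
  have hfc : ContinuousOn f (Icc (0:ℝ) T) := fun t ht => (hf t ht).continuousAt.continuousWithinAt
  have huc : ContinuousOn u (Icc (0:ℝ) T) := fun t ht => (hu t ht).continuousAt.continuousWithinAt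
  have hvc : ContinuousOn v (Icc (0:ℝ) T) := fun t ht => (hv t ht).continuousAt.continuousWithinAt
  have hpc : ContinuousOn p (Icc (0:ℝ) T) := fun t ht => (hp t ht).continuousAt.continuousWithinAt
  have hqc : ContinuousOn q (Icc (0:ℝ) T) := fun t ht => (hq t ht).continuousAt.continuousWithinAt
  have hfne : ∀ t ∈ Icc (0:ℝ) T, (f t : ℂ) ≠ 0 := fun t ht => by
    exact_mod_cast (hfpos t ht).ne'
  -- complex-valued continuous versions
  have hfC : ContinuousOn (fun t => (f t : ℂ)) (Icc (0:ℝ) T) :=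
    Complex.continuous_ofReal.comp_continuousOn hfc
  have hf'C : ContinuousOn (fun t => (f' t : ℂ)) (Icc (0:ℝ) T) :=
    Complex.continuous_ofReal.comp_continuousOn hf'c
  -- the boundary function
  set g : ℝ → ℂ := fun t => Complex.I * (f t : ℂ) *
      (v t * star (p t) + u t * star (q t)) with hgdef
  set g' : ℝ → ℂ := fun t => Complex.I * ((f' t : ℂ) *
      (v t * star (p t) + u t * star (q t)) + (f t : ℂ) *
      ((v' t * star (p t) + v t * star (p' t)) + (u' t * star (q t) + u t * star (q' t)))) with hg'def
  have hgderiv : ∀ t ∈ uIcc (0:ℝ) T, HasDerivAt g (g' t) t := by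
    intro t ht
    rw [hIcc] at ht
    have Hf : HasDerivAt (fun t => Complex.I * (f t : ℂ)) (Complex.I * (f' t : ℂ)) t :=
      ((hf t ht).ofReal_comp).const_mul Complex.I
    have Hs : HasDerivAt (fun t => v t * star (p t) + u t * star (q t))
        ((v' t * star (p t) + v t * star (p' t)) + (u' t * star (q t) + u t * star (q' t))) t :=
      (((hv t ht).mul (hp t ht).star)).add ((hu t ht).mul (hq t ht).star)
    have := Hf.mul Hs
    convert this using 1
    show g' t = _
    simp only [hg'def]
    ring
    all_goals rfl
  have hg'cont : ContinuousOn g' (Icc (0:ℝ) T) := by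
    apply ContinuousOn.mul continuousOn_const
    exact (hf'C.mul ((hvc.mul hpc.star).add (huc.mul hqc.star))).add
      (hfC.mul (((hv'c.mul hpc.star).add (hvc.mul hp'c.star)).add
        ((hu'c.mul hqc.star).add (huc.mul hq'c.star))))
  have key : (∫ t in (0:ℝ)..T, g' t) = g T - g 0 :=
    integral_eq_sub_of_hasDerivAt hgderiv
      ((hg'cont.mono (by rw [hIcc])).intervalIntegrable)
  have hbd : g T - g 0 = 0 := by
    rcases hAPS with ⟨h1, h2, h3, h4⟩ | ⟨h1, h2, h3, h4⟩ <;>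
      simp [hgdef, h1, h2, h3, h4]
  -- integrands
  set F : ℝ → ℂ := fun t =>
    (Duv₁ t * (starRingEnd ℂ) (p t) + Duv₂ t * (starRingEnd ℂ) (q t)) * (f t : ℂ) with hF
  set G : ℝ → ℂ := fun t =>
    (u t * (starRingEnd ℂ) (Dpq₁ t) + v t * (starRingEnd ℂ) (Dpq₂ t)) * (f t : ℂ) with hG
  have hFcont : ContinuousOn F (Icc (0:ℝ) T) := by
    have h1 : ContinuousOn Duv₁ (Icc (0:ℝ) T) := by
      have : ContinuousOn (fun t => Complex.I *
          (v' t + ((f' t : ℂ) / (2 * (f t : ℂ))) * v t + ((m : ℂ) / (f t : ℂ)) * v t))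
          (Icc (0:ℝ) T) := by
        apply ContinuousOn.mul continuousOn_const
        exact ((hv'c.add (((hf'C.div (continuousOn_const.mul hfC)
          (fun t ht => by simpa using hfne t ht)).mul hvc))).add
          ((continuousOn_const.div hfC (hfne)).mul hvc))
      exact this.congr (fun t _ => hDuv₁ t)
    have h2 : ContinuousOn Duv₂ (Icc (0:ℝ) T) := by
      have : ContinuousOn (fun t => Complex.I *
          (u' t + ((f' t : ℂ) / (2 * (f t : ℂ))) * u t - ((m : ℂ) / (f t : ℂ)) * u t))
          (Icc (0:ℝ) T) := by
        apply ContinuousOn.mul continuousOn_const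
        exact ((hu'c.add (((hf'C.div (continuousOn_const.mul hfC)
          (fun t ht => by simpa using hfne t ht)).mul huc))).sub
          ((continuousOn_const.div hfC (hfne)).mul huc))
      exact this.congr (fun t _ => hDuv₂ t)
    exact ((h1.mul hpc.star).add (h2.mul hqc.star)).mul hfC
  have hGcont : ContinuousOn G (Icc (0:ℝ) T) := by
    have h1 : ContinuousOn Dpq₁ (Icc (0:ℝ) T) := by
      have : ContinuousOn (fun t => Complex.I *
          (q' t + ((f' t : ℂ) / (2 * (f t : ℂ))) * q t + ((m : ℂ) / (f t : ℂ)) * q t))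
          (Icc (0:ℝ) T) := by
        apply ContinuousOn.mul continuousOn_const
        exact ((hq'c.add (((hf'C.div (continuousOn_const.mul hfC)
          (fun t ht => by simpa using hfne t ht)).mul hqc))).add
          ((continuousOn_const.div hfC (hfne)).mul hqc))
      exact this.congr (fun t _ => hDpq₁ t)
    have h2 : ContinuousOn Dpq₂ (Icc (0:ℝ) T) := by
      have : ContinuousOn (fun t => Complex.I *
          (p' t + ((f' t : ℂ) / (2 * (f t : ℂ))) * p t - ((m : ℂ) / (f t : ℂ)) * p t))
          (Icc (0:ℝ) T) := by
        apply ContinuousOn.mul continuousOn_const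
        exact ((hp'c.add (((hf'C.div (continuousOn_const.mul hfC)
          (fun t ht => by simpa using hfne t ht)).mul hpc))).sub
          ((continuousOn_const.div hfC (hfne)).mul hpc))
      exact this.congr (fun t _ => hDpq₂ t)
    exact ((huc.mul h1.star).add (hvc.mul h2.star)).mul hfC
  have hFint : IntervalIntegrable F MeasureTheory.volume 0 T :=
    (hFcont.mono (by rw [hIcc])).intervalIntegrable
  have hGint : IntervalIntegrable G MeasureTheory.volume 0 T :=
    (hGcont.mono (by rw [hIcc])).intervalIntegrable
  have hdiff : ∀ t ∈ uIcc (0:ℝ) T, F t - G t = g' t := by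
    intro t ht
    rw [hIcc] at ht
    have hne : (f t : ℂ) ≠ 0 := hfne t ht
    simp only [hF, hG, hg'def, hDuv₁, hDuv₂, hDpq₁, hDpq₂, map_mul, map_add, map_sub,
      map_div₀, Complex.conj_ofReal, Complex.conj_I, starRingEnd_apply]
    simp only [star_mul', star_add, star_sub, star_div₀, star_inv₀, Complex.star_def,
      Complex.conj_ofReal, Complex.conj_I, map_ofNat]
    have h2 : (2:ℂ) * (f t : ℂ) ≠ 0 := by simp [hne]
    field_simp [h2]
    ring
  have : (∫ t in (0:ℝ)..T, F t) - (∫ t in (0:ℝ)..T, G t) = 0 := by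
    rw [← intervalIntegral.integral_sub hFint hGint,
      intervalIntegral.integral_congr hdiff, key, hbd]
  exact sub_eq_zero.mp this
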